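/- Let G be an abelian group and f : G → ℂ. Suppose there exists δ > 0 with |f(x+y) + f(x−y) − 2·f(x)·f(y)| ≤ δ for all x, y ∈ G. Then either |f(x)| ≤ (1 + √(1+2δ))/2 for all x, or f satisfies the d'Alembert (cosine) equation f(x+y) + f(x−y) = 2·f(x)·f(y) for all x, y ∈ G. -/

import Mathlib

set_option maxHeartbeats 1000000 in
theorem stmt_3 (G : Type*) [AddCommGroup G] (f : G → ℂ)
    (δ : ℝ) (hδ : 0 < δ)
    (h : ∀ x y : G, ‖f (x + y) + f (x - y) - 2 * f x * f y‖ ≤ δ) :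
    (∀ x : G, ‖f x‖ ≤ (1 + Real.sqrt (1 + 2 * δ)) / 2) ∨
    (∀ x y : G, f (x + y) + f (x - y) = 2 * f x * f y) := by
  set M : ℝ := (1 + Real.sqrt (1 + 2 * δ)) / 2 with hM
  have hs : Real.sqrt (1 + 2*δ) ^ 2 = 1 + 2*δ := Real.sq_sqrt (by linarith)
  have hs1 : 1 ≤ Real.sqrt (1 + 2*δ) := by
    nlinarith [Real.sqrt_nonneg (1 + 2*δ)]
  have hM1 : 1 ≤ M := by rw [hM]; linarith
  have hM2 : M^2 = M + δ/2 := by rw [hM]; nlinarith [hs]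
  by_cases hb : ∀ x : G, ‖f x‖ ≤ M
  · exact Or.inl hb
  push_neg at hb
  obtain ⟨a, ha⟩ := hb
  right
  -- |f 0| ≤ M
  have hf0 : ‖f 0‖ ≤ M := by
    by_contra hc
    push_neg at hc
    have h00 := h 0 0
    simp only [add_zero, sub_zero] at h00
    have h1 : ‖2 * f 0 * f 0‖ - ‖f 0 + f 0‖ ≤
        ‖f 0 + f 0 - 2 * f 0 * f 0‖ := by
      have := abs_norm_sub_norm_le (2 * f 0 * f 0) (f 0 + f 0)
      rw [abs_le] at this
      have h2 : ‖2 * f 0 * f 0 - (f 0 + f 0)‖ =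
          ‖f 0 + f 0 - 2 * f 0 * f 0‖ := by
        rw [← norm_neg]; ring_nf
      linarith [this.2]
    have e1 : ‖2 * f 0 * f 0‖ = 2 * ‖f 0‖ * ‖f 0‖ := by
      rw [norm_mul, norm_mul, Complex.norm_two]
    have e2 : ‖f 0 + f 0‖ ≤ 2 * ‖f 0‖ := by
      calc ‖f 0 + f 0‖ ≤ ‖f 0‖ + ‖f 0‖ :=
            norm_add_le _ _
        _ = 2 * ‖f 0‖ := by ring
    nlinarith [hc, hM1, h00]
  set b : ℝ := ‖f a‖ - M with hbdef
  have hb0 : 0 < b := by simp [hbdef]; linarith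
  -- doubling sequence
  obtain ⟨z, hz0, hzs⟩ : ∃ z : ℕ → G, z 0 = a ∧ ∀ n, z (n+1) = z n + z n :=
    ⟨fun n => Nat.rec a (fun _ w => w + w) n, rfl, fun n => rfl⟩
  have grow : ∀ n : ℕ, M + 2^n * b ≤ ‖f (z n)‖ := by
    intro n
    induction n with
    | zero => simp [hz0, hbdef]
    | succ n ih =>
      have hn := h (z n) (z n)
      rw [sub_self] at hn
      have tri : ‖2 * f (z n) * f (z n)‖ ≤
          ‖f (z n + z n) + f 0 - 2 * f (z n) * f (z n)‖ +
          ‖f (z n + z n)‖ + ‖f 0‖ := by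
        have e : 2 * f (z n) * f (z n) =
            f (z n + z n) + f 0 - (f (z n + z n) + f 0 - 2 * f (z n) * f (z n)) := by ring
        calc ‖2 * f (z n) * f (z n)‖
            = ‖f (z n + z n) + f 0 - (f (z n + z n) + f 0 - 2 * f (z n) * f (z n))‖ := by rw [← e]
          _ ≤ ‖f (z n + z n) + f 0‖ +
              ‖f (z n + z n) + f 0 - 2 * f (z n) * f (z n)‖ := norm_sub_le _ _
          _ ≤ (‖f (z n + z n)‖ + ‖f 0‖) +
              ‖f (z n + z n) + f 0 - 2 * f (z n) * f (z n)‖ := by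
                have := norm_add_le (f (z n + z n)) (f 0)
                linarith
          _ = _ := by ring
      have e1 : ‖2 * f (z n) * f (z n)‖ =
          2 * ‖f (z n)‖ * ‖f (z n)‖ := by
        rw [norm_mul, norm_mul, Complex.norm_two]
      rw [hzs n]
      have hp : (0:ℝ) < 2^n := by positivity
      set c : ℝ := 2^n * b with hc
      have hc0 : 0 < c := by positivity
      have hu : M + c ≤ ‖f (z n)‖ := ih
      have hsq : (M + c)^2 ≤ ‖f (z n)‖^2 := by
        have h0 : 0 ≤ M + c := by linarith
        nlinarith
      have hMc : 2 * c ≤ 4 * M * c := by nlinarith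
      have hps : (2:ℝ)^(n+1) = 2 * 2^n := by rw [pow_succ]; ring
      rw [hps]
      nlinarith [hn, tri, e1, hf0, hM2, hsq, hMc, sq_nonneg c]
  -- main identity and conclusion
  intro x y
  set E : ℂ := f (x + y) + f (x - y) - 2 * f x * f y with hE
  rw [← sub_eq_zero]
  show E = 0
  by_contra hE0
  have hEpos : 0 < ‖E‖ := norm_pos_iff.mpr hE0
  set C : ℝ := 4 * δ + 2 * ‖f y‖ * δ with hC
  have key : ∀ w : G, 2 * ‖f w‖ * ‖E‖ ≤ C := by
    intro w
    have h1 := h w (x + y)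
    have h2 := h w (x - y)
    have h3 := h w x
    have h4 := h (w + x) y
    have h5 := h (w - x) y
    rw [show w + (x + y) = w + x + y from by abel, show w - (x + y) = w - x - y from by abel] at h1
    rw [show w + (x - y) = w + x - y from by abel, show w - (x - y) = w - x + y from by abel] at h2
    have iden : 2 * f w * E =
        (f (w + x + y) + f (w + x - y) - 2 * f (w + x) * f y) +
        (f (w - x + y) + f (w - x - y) - 2 * f (w - x) * f y) -
        (f (w + x + y) + f (w - x - y) - 2 * f w * f (x + y)) -
        (f (w + x - y) + f (w - x + y) - 2 * f w * f (x - y)) +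
        2 * f y * (f (w + x) + f (w - x) - 2 * f w * f x) := by
      rw [hE]; ring
    have tri : ‖2 * f w * E‖ ≤
        ‖f (w + x + y) + f (w + x - y) - 2 * f (w + x) * f y‖ +
        ‖f (w - x + y) + f (w - x - y) - 2 * f (w - x) * f y‖ +
        ‖f (w + x + y) + f (w - x - y) - 2 * f w * f (x + y)‖ +
        ‖f (w + x - y) + f (w - x + y) - 2 * f w * f (x - y)‖ +
        ‖2 * f y * (f (w + x) + f (w - x) - 2 * f w * f x)‖ := by
      rw [iden]
      set A := f (w + x + y) + f (w + x - y) - 2 * f (w + x) * f y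
      set B := f (w - x + y) + f (w - x - y) - 2 * f (w - x) * f y
      set Cc := f (w + x + y) + f (w - x - y) - 2 * f w * f (x + y)
      set D := f (w + x - y) + f (w - x + y) - 2 * f w * f (x - y)
      set Ee := 2 * f y * (f (w + x) + f (w - x) - 2 * f w * f x)
      calc ‖A + B - Cc - D + Ee‖
          ≤ ‖A + B - Cc - D‖ + ‖Ee‖ := norm_add_le _ _
        _ ≤ (‖A + B - Cc‖ + ‖D‖) + ‖Ee‖ := by
            have := norm_sub_le (A + B - Cc) D
            linarith
        _ ≤ ((‖A + B‖ + ‖Cc‖) + ‖D‖) + ‖Ee‖ := by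
            have := norm_sub_le (A + B) Cc
            linarith
        _ ≤ (((‖A‖ + ‖B‖) + ‖Cc‖) + ‖D‖) + ‖Ee‖ := by
            have := norm_add_le A B
            linarith
        _ = _ := by ring
    have e5 : ‖2 * f y * (f (w + x) + f (w - x) - 2 * f w * f x)‖ =
        2 * ‖f y‖ * ‖f (w + x) + f (w - x) - 2 * f w * f x‖ := by
      rw [norm_mul, norm_mul, Complex.norm_two]
    have eL : ‖2 * f w * E‖ = 2 * ‖f w‖ * ‖E‖ := by
      rw [norm_mul, norm_mul, Complex.norm_two]
    rw [eL, e5] at tri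
    have hfy : 0 ≤ ‖f y‖ := norm_nonneg _
    have h3' := mul_le_mul_of_nonneg_left h3 (by positivity : (0:ℝ) ≤ 2 * ‖f y‖)
    rw [hC]
    linarith
  obtain ⟨n, hn⟩ := pow_unbounded_of_one_lt (C / (b * ‖E‖)) (one_lt_two (α := ℝ))
  have h1 : C < 2^n * (b * ‖E‖) := by
    rw [div_lt_iff₀ (by positivity)] at hn
    linarith
  have k2 : 2 * (M + 2^n * b) * ‖E‖ ≤ C :=
    le_trans (mul_le_mul_of_nonneg_right (by linarith [grow n]) (norm_nonneg E)) (key (z n))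
  have k3 : 0 ≤ (2 * M + 2^n * b) * ‖E‖ :=
    mul_nonneg (by positivity) (norm_nonneg E)
  nlinarith [h1, k2, k3]
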